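/- Suppose f : [0,T] → V* is continuously differentiable, (u,p) solves the two-field system with u continuously differentiable and p continuously differentiable, and (ū,p̄) solves the delay two-field system with ū continuously differentiable and p̄ twice continuously differentiable on [−τ,T], where u(0) = ū(0) and p(0) = p̄(0). Then there is a constant C depending only on c_a, c_b, c_c, C_d (in particular independent of τ, t and T) such that for all t ∈ [0,T]: ‖p̄(t) − p(t)‖_Q² ≤ C · τ² · t · M² and ‖ū(t) − u(t)‖_V² ≤ C · ( τ² ∫₀ᵗ ‖p̄′(s)‖_{H_Q}² ds + τ² (1 + τ²) · t · M² ), where M := sup_{s ∈ [−τ,t]} ‖p̄″(s)‖_{H_Q}. -/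

import Mathlib

open Set

/-- Bundle a bounded bilinear form as a continuous bilinear map. -/
private noncomputable def mkB {E F : Type*} [NormedAddCommGroup E] [NormedSpace ℝ E]
    [NormedAddCommGroup F] [NormedSpace ℝ F]
    (B : E →ₗ[ℝ] F →ₗ[ℝ] ℝ) (C : ℝ) (h : ∀ x y, |B x y| ≤ C * ‖x‖ * ‖y‖) :
    E →L[ℝ] F →L[ℝ] ℝ :=
  LinearMap.mkContinuous₂ B C (fun x y => by simpa [Real.norm_eq_abs] using h x y)

@[simp] private lemma mkB_apply {E F : Type*} [NormedAddCommGroup E] [NormedSpace ℝ E]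
    [NormedAddCommGroup F] [NormedSpace ℝ F]
    (B : E →ₗ[ℝ] F →ₗ[ℝ] ℝ) (C : ℝ) (h : ∀ x y, |B x y| ≤ C * ‖x‖ * ‖y‖) (x : E) (y : F) :
    mkB B C h x y = B x y := rfl

private lemma bilinDeriv {E F : Type*} [NormedAddCommGroup E] [NormedSpace ℝ E]
    [NormedAddCommGroup F] [NormedSpace ℝ F]
    (B : E →L[ℝ] F →L[ℝ] ℝ) {x : ℝ → E} {y : ℝ → F} {x' : E} {y' : F} {s : Set ℝ} {t : ℝ}
    (hx : HasDerivWithinAt x x' s t) (hy : HasDerivWithinAt y y' s t) :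
    HasDerivWithinAt (fun r => B (x r) (y r)) (B x' (y t) + B (x t) y') s t := by
  have h1 : HasDerivWithinAt (fun r => B (x r)) (B x') s t :=
    B.hasFDerivAt.comp_hasDerivWithinAt t hx
  exact h1.clm_apply hy

/-- Cauchy–Schwarz for interval integrals of nonnegative continuous functions,
via an ε-Young trick. -/
private lemma sq_integral_le {g : ℝ → ℝ} {A B : ℝ} (hab : A ≤ B)
    (hg : ContinuousOn g (Icc A B)) (hg0 : ∀ x ∈ Icc A B, 0 ≤ g x) :
    (∫ s in A..B, g s) ^ 2 ≤ (B - A) * ∫ s in A..B, g s ^ 2 := by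
  have hgu : ContinuousOn g (uIcc A B) := by rwa [uIcc_of_le hab]
  have hgi : IntervalIntegrable g MeasureTheory.volume A B := hgu.intervalIntegrable
  have hgi2 : IntervalIntegrable (fun s => g s ^ 2) MeasureTheory.volume A B :=
    (hgu.pow 2).intervalIntegrable
  have hL0 : 0 ≤ ∫ s in A..B, g s := intervalIntegral.integral_nonneg hab hg0
  have hI0 : 0 ≤ ∫ s in A..B, g s ^ 2 :=
    intervalIntegral.integral_nonneg hab (fun u _ => sq_nonneg _)
  have key : ∀ ε : ℝ, 0 < ε →
      (∫ s in A..B, g s) ≤ (∫ s in A..B, g s ^ 2) / (2 * ε) + ε * (B - A) / 2 := by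
    intro ε hε
    have h2ε : (0:ℝ) < 2 * ε := by linarith
    have hpt : ∀ x ∈ Icc A B, g x ≤ g x ^ 2 / (2 * ε) + ε / 2 := by
      intro x hx
      have hdiff : g x ^ 2 / (2 * ε) + ε / 2 - g x = (g x - ε) ^ 2 / (2 * ε) := by
        field_simp; ring
      have := div_nonneg (sq_nonneg (g x - ε)) h2ε.le
      linarith [hdiff ▸ this]
    have hint : IntervalIntegrable (fun s => g s ^ 2 / (2 * ε) + ε / 2)
        MeasureTheory.volume A B := (hgi2.div_const (2 * ε)).add intervalIntegrable_const
    calc (∫ s in A..B, g s) ≤ ∫ s in A..B, (g s ^ 2 / (2 * ε) + ε / 2) :=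
          intervalIntegral.integral_mono_on hab hgi hint hpt
      _ = (∫ s in A..B, g s ^ 2) / (2 * ε) + ε * (B - A) / 2 := by
          rw [intervalIntegral.integral_add (hgi2.div_const (2 * ε)) intervalIntegrable_const,
            intervalIntegral.integral_div, intervalIntegral.integral_const, smul_eq_mul]
          ring
  rcases eq_or_lt_of_le hab with heq | hlt
  · subst heq; simp
  · by_cases hI : (∫ s in A..B, g s ^ 2) ≤ 0
    · have hIz : (∫ s in A..B, g s ^ 2) = 0 := le_antisymm hI hI0
      have hL : (∫ s in A..B, g s) ≤ 0 := by
        by_contra h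
        push_neg at h
        have hBA : (0:ℝ) < B - A := sub_pos.2 hlt
        have hk := key ((∫ s in A..B, g s) / (B - A)) (div_pos h hBA)
        rw [hIz] at hk
        have he : (∫ s in A..B, g s) / (B - A) * (B - A) = ∫ s in A..B, g s :=
          div_mul_cancel₀ _ (ne_of_gt hBA)
        rw [zero_div] at hk
        nlinarith
      have hLz : (∫ s in A..B, g s) = 0 := le_antisymm hL hL0
      rw [hLz, hIz]; simp
    · push_neg at hI
      set e := Real.sqrt ((∫ s in A..B, g s ^ 2) / (B - A)) with he
      have hBA : (0:ℝ) < B - A := sub_pos.2 hlt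
      have hepos : 0 < e := Real.sqrt_pos.2 (div_pos hI hBA)
      have he2 : e ^ 2 = (∫ s in A..B, g s ^ 2) / (B - A) :=
        Real.sq_sqrt (le_of_lt (div_pos hI hBA))
      have hIval : (∫ s in A..B, g s ^ 2) = e ^ 2 * (B - A) := by
        rw [he2, div_mul_cancel₀ _ (ne_of_gt hBA)]
      have hk := key e hepos
      have hrhs : (∫ s in A..B, g s ^ 2) / (2 * e) + e * (B - A) / 2 = e * (B - A) := by
        rw [hIval]; field_simp; ring
      rw [hrhs] at hk
      calc (∫ s in A..B, g s) ^ 2 ≤ (e * (B - A)) ^ 2 := by nlinarith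
        _ = (B - A) * (∫ s in A..B, g s ^ 2) := by rw [hIval]; ring
set_option maxHeartbeats 4000000 in
theorem stmt1 {V HV Q HQ : Type*}
    [NormedAddCommGroup V] [InnerProductSpace ℝ V] [CompleteSpace V]
    [NormedAddCommGroup HV] [InnerProductSpace ℝ HV] [CompleteSpace HV]
    [NormedAddCommGroup Q] [InnerProductSpace ℝ Q] [CompleteSpace Q]
    [NormedAddCommGroup HQ] [InnerProductSpace ℝ HQ] [CompleteSpace HQ]
    -- continuous embeddings V ↪ H_V and Q ↪ H_Q
    (ιV : V →L[ℝ] HV) (hιV : Function.Injective ιV)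
    (ιQ : Q →L[ℝ] HQ) (hιQ : Function.Injective ιQ)
    (C_VH C_QH : ℝ)
    (hCVH : ∀ v : V, ‖ιV v‖ ≤ C_VH * ‖v‖)
    (hCQH : ∀ q : Q, ‖ιQ q‖ ≤ C_QH * ‖q‖)
    -- the bilinear forms and their constants
    (a : V →ₗ[ℝ] V →ₗ[ℝ] ℝ) (b : Q →ₗ[ℝ] Q →ₗ[ℝ] ℝ)
    (c : HQ →ₗ[ℝ] HQ →ₗ[ℝ] ℝ) (d : V →ₗ[ℝ] HQ →ₗ[ℝ] ℝ)
    (c_a C_a c_b C_b c_c C_c C_d C_d' : ℝ)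
    (hc_a : 0 < c_a) (hc_b : 0 < c_b) (hc_c : 0 < c_c)
    (ha_symm : ∀ u v : V, a u v = a v u)
    (ha_coer : ∀ v : V, c_a * ‖v‖ ^ 2 ≤ a v v)
    (ha_bdd : ∀ u v : V, |a u v| ≤ C_a * ‖u‖ * ‖v‖)
    (hb_symm : ∀ p q : Q, b p q = b q p)
    (hb_coer : ∀ q : Q, c_b * ‖q‖ ^ 2 ≤ b q q)
    (hb_bdd : ∀ p q : Q, |b p q| ≤ C_b * ‖p‖ * ‖q‖)
    (hc_symm : ∀ p q : HQ, c p q = c q p)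
    (hc_coer : ∀ q : HQ, c_c * ‖q‖ ^ 2 ≤ c q q)
    (hc_bdd : ∀ p q : HQ, |c p q| ≤ C_c * ‖p‖ * ‖q‖)
    (hd_bdd : ∀ (v : V) (q : HQ), |d v q| ≤ C_d * ‖v‖ * ‖q‖)
    (hd_bdd' : ∀ (v : V) (q : Q), |d v (ιQ q)| ≤ C_d' * ‖ιV v‖ * ‖q‖) :
    ∃ C : ℝ, 0 < C ∧
      ∀ (T τ : ℝ), 0 < T → 0 < τ →
      ∀ (f f' : ℝ → V →L[ℝ] ℝ) (g : ℝ → Q →L[ℝ] ℝ)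
        (u u' : ℝ → V) (p p' : ℝ → Q)
        (ubar ubar' : ℝ → V) (pbar pbar' pbar'' : ℝ → Q),
        -- data: f continuously differentiable, g continuous
        (∀ t ∈ Icc (0:ℝ) T, HasDerivWithinAt f (f' t) (Icc 0 T) t) →
        ContinuousOn f (Icc 0 T) → ContinuousOn f' (Icc 0 T) → ContinuousOn g (Icc 0 T) →
        -- (u,p) is a C¹ solution of the two-field system
        (∀ t ∈ Icc (0:ℝ) T, HasDerivWithinAt u (u' t) (Icc 0 T) t) →
        ContinuousOn u' (Icc 0 T) →
        (∀ t ∈ Icc (0:ℝ) T, HasDerivWithinAt p (p' t) (Icc 0 T) t) →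
        ContinuousOn p' (Icc 0 T) →
        (∀ t ∈ Icc (0:ℝ) T, ∀ v : V, a (u t) v - d v (ιQ (p t)) = f t v) →
        (∀ t ∈ Icc (0:ℝ) T, ∀ q : Q,
          d (u' t) (ιQ q) + c (ιQ (p' t)) (ιQ q) + b (p t) q = g t q) →
        -- (ū,p̄) is a solution of the delay system, ū ∈ C¹([0,T]), p̄ ∈ C²([−τ,T])
        (∀ t ∈ Icc (0:ℝ) T, HasDerivWithinAt ubar (ubar' t) (Icc 0 T) t) →
        ContinuousOn ubar' (Icc 0 T) →
        (∀ t ∈ Icc (-τ) T, HasDerivWithinAt pbar (pbar' t) (Icc (-τ) T) t) →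
        (∀ t ∈ Icc (-τ) T, HasDerivWithinAt pbar' (pbar'' t) (Icc (-τ) T) t) →
        ContinuousOn pbar' (Icc (-τ) T) → ContinuousOn pbar'' (Icc (-τ) T) →
        (∀ t ∈ Icc (0:ℝ) T, ∀ v : V, a (ubar t) v - d v (ιQ (pbar (t - τ))) = f t v) →
        (∀ t ∈ Icc (0:ℝ) T, ∀ q : Q,
          d (ubar' t) (ιQ q) + c (ιQ (pbar' t)) (ιQ q) + b (pbar t) q = g t q) →
        -- matching initial values
        u 0 = ubar 0 → p 0 = pbar 0 →
        ∀ t ∈ Icc (0:ℝ) T,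
          ‖pbar t - p t‖ ^ 2 ≤
              C * τ ^ 2 * t * (⨆ s : Icc (-τ) t, ‖ιQ (pbar'' (s : ℝ))‖) ^ 2 ∧
          ‖ubar t - u t‖ ^ 2 ≤
              C * (τ ^ 2 * (∫ s in (0:ℝ)..t, ‖ιQ (pbar' s)‖ ^ 2) +
                τ ^ 2 * (1 + τ ^ 2) * t *
                  (⨆ s : Icc (-τ) t, ‖ιQ (pbar'' (s : ℝ))‖) ^ 2) := by
  have hCd0 : (0:ℝ) ≤ max C_d 0 := le_max_right _ _
  have hCQ0 : (0:ℝ) ≤ max C_QH 0 := le_max_right _ _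
  set Cd := max C_d 0 with hCddef
  set CQ := max C_QH 0 with hCQdef
  have hcab : (0:ℝ) < c_a * c_b := mul_pos hc_a hc_b
  have hca2 : (0:ℝ) < c_a ^ 2 := pow_pos hc_a 2
  have hA1 : (0:ℝ) ≤ Cd ^ 2 / (c_a * c_b) := div_nonneg (sq_nonneg _) hcab.le
  have hA2 : (0:ℝ) ≤ Cd ^ 2 / c_a ^ 2 := div_nonneg (sq_nonneg _) hca2.le
  have hA3 : (0:ℝ) ≤ (Cd ^ 2 / c_a ^ 2) * (8 + 2 * CQ ^ 2 * (Cd ^ 2 / (c_a * c_b))) :=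
    mul_nonneg hA2 (by linarith [mul_nonneg (sq_nonneg CQ) hA1])
  set CC := 1 + Cd ^ 2 / (c_a * c_b) + Cd ^ 2 / c_a ^ 2 +
      (Cd ^ 2 / c_a ^ 2) * (8 + 2 * CQ ^ 2 * (Cd ^ 2 / (c_a * c_b))) +
      4 * (Cd ^ 2 / c_a ^ 2) with hCCdef
  have hCpos : 0 < CC := by rw [hCCdef]; linarith [hA1, hA2, hA3]
  refine ⟨CC, hCpos, ?_⟩
  intro T τ hT hτ f f' g u u' p p' ubar ubar' pbar pbar' pbar''
    hfD hfc hf'c hgc huD hu'c hpD hp'c heq1 heq2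
    hubD hub'c hpbD hpb'D hpb'c hpb''c heqd1 heqd2 hu0 hp0 t ht
  obtain ⟨ht0, htT⟩ := ht
  set M := ⨆ s : Icc (-τ) t, ‖ιQ (pbar'' (s : ℝ))‖ with hMdef
  set I := ∫ s in (0:ℝ)..t, ‖ιQ (pbar' s)‖ ^ 2 with hIdef
  set eu : ℝ → V := fun s => ubar s - u s with heudef
  set eu' : ℝ → V := fun s => ubar' s - u' s with heu'def
  set ep : ℝ → Q := fun s => pbar s - p s with hepdef
  set ep' : ℝ → Q := fun s => pbar' s - p' s with hep'def
  have h0sub : Icc (0:ℝ) T ⊆ Icc (-τ) T := Icc_subset_Icc (by linarith) le_rfl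
  have hsub2 : Icc (-τ) t ⊆ Icc (-τ) T := Icc_subset_Icc le_rfl htT
  have h0t : Icc (0:ℝ) t ⊆ Icc 0 T := Icc_subset_Icc le_rfl htT
  have h0tB : Icc (0:ℝ) t ⊆ Icc (-τ) T := fun x hx => h0sub (h0t hx)
  have hnegτt : -τ ≤ t := by linarith
  -- derivative facts for the differences
  have heuD : ∀ s ∈ Icc (0:ℝ) T, HasDerivWithinAt eu (eu' s) (Icc 0 T) s := by
    intro s hs
    exact (hubD s hs).sub (huD s hs)
  have hepD : ∀ s ∈ Icc (0:ℝ) T, HasDerivWithinAt ep (ep' s) (Icc 0 T) s := by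
    intro s hs
    exact ((hpbD s (h0sub hs)).mono h0sub).sub (hpD s hs)
  -- continuity facts
  have hubc : ContinuousOn ubar (Icc (0:ℝ) T) := fun s hs => (hubD s hs).continuousWithinAt
  have huc : ContinuousOn u (Icc (0:ℝ) T) := fun s hs => (huD s hs).continuousWithinAt
  have hpc : ContinuousOn p (Icc (0:ℝ) T) := fun s hs => (hpD s hs).continuousWithinAt
  have hpbc : ContinuousOn pbar (Icc (-τ) T) := fun s hs => (hpbD s hs).continuousWithinAt
  have heuc : ContinuousOn eu (Icc (0:ℝ) T) := by
    rw [heudef]; exact hubc.sub huc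
  have hepc : ContinuousOn ep (Icc (0:ℝ) T) := by
    rw [hepdef]; exact (hpbc.mono h0sub).sub hpc
  have heu'c : ContinuousOn eu' (Icc (0:ℝ) T) := by
    rw [heu'def]; exact hub'c.sub hu'c
  have hep'c : ContinuousOn ep' (Icc (0:ℝ) T) := by
    rw [hep'def]; exact (hpb'c.mono h0sub).sub hp'c
  -- facts about M
  have hcont'' : ContinuousOn (fun s => ‖ιQ (pbar'' s)‖) (Icc (-τ) t) :=
    (ιQ.continuous.comp_continuousOn (hpb''c.mono hsub2)).norm
  have hMbdd : BddAbove (Set.range fun s : Icc (-τ) t => ‖ιQ (pbar'' (s : ℝ))‖) := by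
    have himg : BddAbove ((fun s => ‖ιQ (pbar'' s)‖) '' (Icc (-τ) t)) :=
      (isCompact_Icc.image_of_continuousOn hcont'').bddAbove
    rw [Set.image_eq_range (fun s => ‖ιQ (pbar'' s)‖) (Icc (-τ) t)] at himg
    exact himg
  have hMle : ∀ s ∈ Icc (-τ) t, ‖ιQ (pbar'' s)‖ ≤ M := fun s hs => le_ciSup hMbdd ⟨s, hs⟩
  have hM0 : 0 ≤ M := le_trans (norm_nonneg _) (hMle t ⟨hnegτt, le_rfl⟩)
  -- Lipschitz bound for ιQ ∘ pbar' on [-τ, t]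
  have hlip : ∀ x ∈ Icc (-τ) t, ∀ y ∈ Icc (-τ) t,
      ‖ιQ (pbar' x) - ιQ (pbar' y)‖ ≤ M * |x - y| := by
    intro x hx y hy
    have h := Convex.norm_image_sub_le_of_norm_hasDerivWithin_le
      (f := fun s => ιQ (pbar' s)) (f' := fun s => ιQ (pbar'' s)) (C := M)
      (fun z hz => ιQ.hasFDerivAt.comp_hasDerivWithinAt z ((hpb'D z (hsub2 hz)).mono hsub2))
      (fun z hz => hMle z hz) (convex_Icc _ _) hy hx
    simpa [Real.norm_eq_abs] using h
  -- elliptic difference identity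
  have helli : ∀ s ∈ Icc (0:ℝ) T, ∀ v : V,
      a (eu s) v = d v (ιQ (pbar (s - τ)) - ιQ (p s)) := by
    intro s hs v
    have h1 := heq1 s hs v
    have h2 := heqd1 s hs v
    have e1 : a (eu s) v = a (ubar s) v - a (u s) v := by
      rw [heudef]; simp [map_sub, LinearMap.sub_apply]
    have e2 : d v (ιQ (pbar (s - τ)) - ιQ (p s))
        = d v (ιQ (pbar (s - τ))) - d v (ιQ (p s)) := by
      simp [map_sub]
    rw [e1, e2]; linarith
  -- derivative of the shifted pbar
  have hshift : ∀ s ∈ Icc (0:ℝ) T,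
      HasDerivWithinAt (fun r => pbar (r - τ)) (pbar' (s - τ)) (Icc 0 T) s := by
    intro s hs
    have hmem : s - τ ∈ Icc (-τ) T := ⟨by linarith [hs.1], by linarith [hs.2]⟩
    have hmaps : Set.MapsTo (fun r : ℝ => r - τ) (Icc (0:ℝ) T) (Icc (-τ) T) := by
      intro r hr
      show r - τ ∈ Icc (-τ) T
      exact ⟨by linarith [hr.1], by linarith [hr.2]⟩
    have h := (hpbD _ hmem).scomp (h := fun r => r - τ) s
      ((hasDerivWithinAt_id s (Icc (0:ℝ) T)).sub_const τ) hmaps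
    simpa [Function.comp_def] using h
  -- differentiated elliptic difference identity
  have helli' : ∀ s ∈ Icc (0:ℝ) T, ∀ v : V,
      a (eu' s) v = d v (ιQ (pbar' (s - τ)) - ιQ (p' s)) := by
    intro s hs v
    have hud : UniqueDiffWithinAt ℝ (Icc (0:ℝ) T) s := (uniqueDiffOn_Icc hT) s hs
    have hF : HasDerivWithinAt (fun r => a (eu r) v) (a (eu' s) v) (Icc 0 T) s :=
      ((mkB a C_a ha_bdd).flip v).hasFDerivAt.comp_hasDerivWithinAt s (heuD s hs)
    have hcurve : HasDerivWithinAt (fun r => ιQ (pbar (r - τ)) - ιQ (p r))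
        (ιQ (pbar' (s - τ)) - ιQ (p' s)) (Icc 0 T) s :=
      (ιQ.hasFDerivAt.comp_hasDerivWithinAt s (hshift s hs)).sub
        (ιQ.hasFDerivAt.comp_hasDerivWithinAt s (hpD s hs))
    have hG : HasDerivWithinAt (fun r => d v (ιQ (pbar (r - τ)) - ιQ (p r)))
        (d v (ιQ (pbar' (s - τ)) - ιQ (p' s))) (Icc 0 T) s :=
      ((mkB d C_d hd_bdd) v).hasFDerivAt.comp_hasDerivWithinAt s hcurve
    have hF' : HasDerivWithinAt (fun r => a (eu r) v)
        (d v (ιQ (pbar' (s - τ)) - ιQ (p' s))) (Icc 0 T) s :=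
      hG.congr (fun r hr => helli r hr v) (helli s hs v)
    have e1 := hF.derivWithin hud
    have e2 := hF'.derivWithin hud
    rw [← e1, ← e2]
  -- parabolic difference identity
  have hpara : ∀ s ∈ Icc (0:ℝ) T, ∀ q : Q,
      d (eu' s) (ιQ q) + c (ιQ (ep' s)) (ιQ q) + b (ep s) q = 0 := by
    intro s hs q
    have h1 := heq2 s hs q
    have h2 := heqd2 s hs q
    have e1 : d (eu' s) (ιQ q) = d (ubar' s) (ιQ q) - d (u' s) (ιQ q) := by
      rw [heu'def]; simp [map_sub, LinearMap.sub_apply]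
    have e2 : c (ιQ (ep' s)) (ιQ q) = c (ιQ (pbar' s)) (ιQ q) - c (ιQ (p' s)) (ιQ q) := by
      rw [hep'def]; simp [map_sub, LinearMap.sub_apply]
    have e3 : b (ep s) q = b (pbar s) q - b (p s) q := by
      rw [hepdef]; simp [map_sub, LinearMap.sub_apply]
    rw [e1, e2, e3]; linarith
  -- derivative of the energy
  have hphiD : ∀ s ∈ Icc (0:ℝ) T,
      HasDerivWithinAt (fun r => b (ep r) (ep r)) (2 * b (ep s) (ep' s)) (Icc 0 T) s := by
    intro s hs
    have h := bilinDeriv (mkB b C_b hb_bdd) (hepD s hs) (hepD s hs)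
    simp only [mkB_apply] at h
    have e : b (ep' s) (ep s) + b (ep s) (ep' s) = 2 * b (ep s) (ep' s) := by
      rw [hb_symm (ep' s) (ep s)]; ring
    rwa [e] at h
  -- pointwise energy inequality
  have hkey : ∀ s ∈ Icc (0:ℝ) t,
      2 * b (ep s) (ep' s) ≤ Cd ^ 2 * τ ^ 2 * M ^ 2 / c_a - c_a * ‖eu' s‖ ^ 2 := by
    intro s hs
    have hsT : s ∈ Icc (0:ℝ) T := h0t hs
    have hw : ‖ιQ (pbar' s) - ιQ (pbar' (s - τ))‖ ≤ τ * M := by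
      have h := hlip s ⟨by linarith [hs.1], hs.2⟩ (s - τ)
        ⟨by linarith [hs.1], by linarith [hs.2]⟩
      rw [show s - (s - τ) = τ by ring, abs_of_pos hτ] at h
      linarith
    have hae := helli' s hsT (eu' s)
    have hpe := hpara s hsT (ep' s)
    have hsplitv : ιQ (ep' s) = (ιQ (pbar' (s - τ)) - ιQ (p' s))
        + (ιQ (pbar' s) - ιQ (pbar' (s - τ))) := by
      rw [hep'def]; simp [map_sub]
    have hsplit : d (eu' s) (ιQ (ep' s)) = a (eu' s) (eu' s)
        + d (eu' s) (ιQ (pbar' s) - ιQ (pbar' (s - τ))) := by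
      rw [hsplitv, map_add, hae]
    have hcoer := ha_coer (eu' s)
    have hcc : 0 ≤ c (ιQ (ep' s)) (ιQ (ep' s)) :=
      le_trans (by positivity) (hc_coer (ιQ (ep' s)))
    have hdb : |d (eu' s) (ιQ (pbar' s) - ιQ (pbar' (s - τ)))|
        ≤ Cd * ‖eu' s‖ * (τ * M) := by
      have h1 := hd_bdd (eu' s) (ιQ (pbar' s) - ιQ (pbar' (s - τ)))
      have h2 : C_d * ‖eu' s‖ * ‖ιQ (pbar' s) - ιQ (pbar' (s - τ))‖
          ≤ Cd * ‖eu' s‖ * ‖ιQ (pbar' s) - ιQ (pbar' (s - τ))‖ :=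
        mul_le_mul_of_nonneg_right
          (mul_le_mul_of_nonneg_right (le_max_left _ _) (norm_nonneg _)) (norm_nonneg _)
      have h3 : Cd * ‖eu' s‖ * ‖ιQ (pbar' s) - ιQ (pbar' (s - τ))‖
          ≤ Cd * ‖eu' s‖ * (τ * M) :=
        mul_le_mul_of_nonneg_left hw (mul_nonneg hCd0 (norm_nonneg _))
      linarith
    have habs := abs_le.1 hdb
    have hyoung : 2 * (Cd * ‖eu' s‖ * (τ * M)) - c_a * ‖eu' s‖ ^ 2
        ≤ Cd ^ 2 * τ ^ 2 * M ^ 2 / c_a := by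
      rw [le_div_iff₀ hc_a]
      linarith [sq_nonneg (c_a * ‖eu' s‖ - Cd * (τ * M))]
    rw [hsplit] at hpe
    linarith [habs.1, habs.2]
  -- integrate the energy inequality
  have hphicont : ContinuousOn (fun r => b (ep r) (ep r)) (Icc (0:ℝ) t) :=
    ContinuousOn.clm_apply
      ((mkB b C_b hb_bdd).continuous.comp_continuousOn (hepc.mono h0t)) (hepc.mono h0t)
  have hphi'cont : ContinuousOn (fun r => 2 * b (ep r) (ep' r)) (Icc (0:ℝ) t) :=
    continuousOn_const.mul (ContinuousOn.clm_apply
      ((mkB b C_b hb_bdd).continuous.comp_continuousOn (hepc.mono h0t)) (hep'c.mono h0t))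
  have hFTCphi : ∫ s in (0:ℝ)..t, 2 * b (ep s) (ep' s)
      = b (ep t) (ep t) - b (ep 0) (ep 0) :=
    intervalIntegral.integral_eq_sub_of_hasDeriv_right_of_le ht0 hphicont
      (fun x hx => ((hphiD x (h0t ⟨hx.1.le, hx.2.le⟩)).hasDerivAt
        (Icc_mem_nhds hx.1 (lt_of_lt_of_le hx.2 htT))).hasDerivWithinAt)
      (hphi'cont.intervalIntegrable_of_Icc ht0)
  have hep0 : ep 0 = 0 := by rw [hepdef]; simp [hp0]
  have hphi0 : b (ep 0) (ep 0) = 0 := by rw [hep0]; simp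
  have heu'cont2 : ContinuousOn (fun s => ‖eu' s‖ ^ 2) (Icc (0:ℝ) t) :=
    ((heu'c.mono h0t).norm).pow 2
  have hIu0 : 0 ≤ ∫ s in (0:ℝ)..t, ‖eu' s‖ ^ 2 :=
    intervalIntegral.integral_nonneg ht0 (fun _ _ => sq_nonneg _)
  have hint2 : IntervalIntegrable
      (fun s => Cd ^ 2 * τ ^ 2 * M ^ 2 / c_a - c_a * ‖eu' s‖ ^ 2)
      MeasureTheory.volume 0 t :=
    (continuousOn_const.sub (continuousOn_const.mul heu'cont2)).intervalIntegrable_of_Icc ht0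
  have hmono := intervalIntegral.integral_mono_on ht0
    (hphi'cont.intervalIntegrable_of_Icc ht0) hint2 hkey
  have hval : ∫ s in (0:ℝ)..t, (Cd ^ 2 * τ ^ 2 * M ^ 2 / c_a - c_a * ‖eu' s‖ ^ 2)
      = Cd ^ 2 * τ ^ 2 * M ^ 2 / c_a * t - c_a * ∫ s in (0:ℝ)..t, ‖eu' s‖ ^ 2 := by
    rw [intervalIntegral.integral_sub
        ((continuousOn_const.intervalIntegrable_of_Icc ht0 :
          IntervalIntegrable (fun _ : ℝ => Cd ^ 2 * τ ^ 2 * M ^ 2 / c_a)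
            MeasureTheory.volume 0 t))
        (((continuousOn_const.mul heu'cont2).intervalIntegrable_of_Icc ht0 :
          IntervalIntegrable (fun s => c_a * ‖eu' s‖ ^ 2) MeasureTheory.volume 0 t)),
      intervalIntegral.integral_const, intervalIntegral.integral_const_mul, smul_eq_mul]
    ring
  rw [hFTCphi, hval, hphi0] at hmono
  have hbept : c_b * ‖ep t‖ ^ 2 ≤ b (ep t) (ep t) := hb_coer _
  have hbept0 : 0 ≤ b (ep t) (ep t) := le_trans (by positivity) hbept
  -- part 1 estimate
  have hept2 : ‖ep t‖ ^ 2 ≤ Cd ^ 2 / (c_a * c_b) * (τ ^ 2 * t * M ^ 2) := by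
    have h1 : c_b * ‖ep t‖ ^ 2 ≤ Cd ^ 2 * τ ^ 2 * M ^ 2 / c_a * t := by
      linarith [mul_nonneg hc_a.le hIu0]
    rw [← mul_le_mul_iff_right₀ hc_b]
    calc c_b * ‖ep t‖ ^ 2 ≤ Cd ^ 2 * τ ^ 2 * M ^ 2 / c_a * t := h1
      _ = c_b * (Cd ^ 2 / (c_a * c_b) * (τ ^ 2 * t * M ^ 2)) := by
          field_simp
  have hIuB : (∫ s in (0:ℝ)..t, ‖eu' s‖ ^ 2) ≤ Cd ^ 2 * τ ^ 2 * M ^ 2 / c_a ^ 2 * t := by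
    have h1 : c_a * (∫ s in (0:ℝ)..t, ‖eu' s‖ ^ 2)
        ≤ Cd ^ 2 * τ ^ 2 * M ^ 2 / c_a * t := by linarith
    rw [← mul_le_mul_iff_right₀ hc_a]
    calc c_a * (∫ s in (0:ℝ)..t, ‖eu' s‖ ^ 2) ≤ Cd ^ 2 * τ ^ 2 * M ^ 2 / c_a * t := h1
      _ = c_a * (Cd ^ 2 * τ ^ 2 * M ^ 2 / c_a ^ 2 * t) := by field_simp
  have hIpos : 0 ≤ I := by
    rw [hIdef]; exact intervalIntegral.integral_nonneg ht0 (fun _ _ => sq_nonneg _)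
  constructor
  · -- first conclusion
    have hq : (0:ℝ) ≤ τ ^ 2 * t * M ^ 2 := by positivity
    have hA1C : Cd ^ 2 / (c_a * c_b) ≤ CC := by
      rw [hCCdef]; linarith [hA1, hA2, hA3]
    have : pbar t - p t = ep t := by rw [hepdef]
    rw [this]
    calc ‖ep t‖ ^ 2 ≤ Cd ^ 2 / (c_a * c_b) * (τ ^ 2 * t * M ^ 2) := hept2
      _ ≤ CC * (τ ^ 2 * t * M ^ 2) := mul_le_mul_of_nonneg_right hA1C hq
      _ = CC * τ ^ 2 * t * M ^ 2 := by ring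
  · -- second conclusion
    have hgoalrw : ubar t - u t = eu t := by rw [heudef]
    rw [hgoalrw]
    have hq2 : (0:ℝ) ≤ τ ^ 2 * (1 + τ ^ 2) * t * M ^ 2 := by positivity
    rcases le_or_gt t 1 with hle | hgt
    · -- small time: use the integrated energy bound
      have hFTCu : ∫ s in (0:ℝ)..t, eu' s = eu t - eu 0 :=
        intervalIntegral.integral_eq_sub_of_hasDeriv_right_of_le ht0 (heuc.mono h0t)
          (fun x hx => ((heuD x (h0t ⟨hx.1.le, hx.2.le⟩)).hasDerivAt
            (Icc_mem_nhds hx.1 (lt_of_lt_of_le hx.2 htT))).hasDerivWithinAt)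
          ((heu'c.mono h0t).intervalIntegrable_of_Icc ht0)
      have heu0 : eu 0 = 0 := by rw [heudef]; simp [hu0]
      have heut : eu t = ∫ s in (0:ℝ)..t, eu' s := by rw [hFTCu, heu0, sub_zero]
      have h1 : ‖eu t‖ ≤ ∫ s in (0:ℝ)..t, ‖eu' s‖ := by
        rw [heut]; exact intervalIntegral.norm_integral_le_integral_norm ht0
      have hL0 : 0 ≤ ∫ s in (0:ℝ)..t, ‖eu' s‖ :=
        intervalIntegral.integral_nonneg ht0 (fun _ _ => norm_nonneg _)
      have hcs := sq_integral_le ht0 ((heu'c.mono h0t).norm) (fun _ _ => norm_nonneg _)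
      rw [sub_zero] at hcs
      have h2 : ‖eu t‖ ^ 2 ≤ t * ∫ s in (0:ℝ)..t, ‖eu' s‖ ^ 2 :=
        le_trans (pow_le_pow_left₀ (norm_nonneg _) h1 2) hcs
      have h3 : t * (∫ s in (0:ℝ)..t, ‖eu' s‖ ^ 2)
          ≤ t * (Cd ^ 2 * τ ^ 2 * M ^ 2 / c_a ^ 2 * t) :=
        mul_le_mul_of_nonneg_left hIuB ht0
      have h4 : ‖eu t‖ ^ 2 ≤ Cd ^ 2 / c_a ^ 2 * (τ ^ 2 * M ^ 2 * t ^ 2) := by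
        have e : t * (Cd ^ 2 * τ ^ 2 * M ^ 2 / c_a ^ 2 * t)
            = Cd ^ 2 / c_a ^ 2 * (τ ^ 2 * M ^ 2 * t ^ 2) := by ring
        linarith [e ▸ h3]
      have ht2 : τ ^ 2 * M ^ 2 * t ^ 2 ≤ τ ^ 2 * (1 + τ ^ 2) * t * M ^ 2 := by
        have e1 : t ^ 2 ≤ t := by
          linarith [mul_nonneg ht0 (sub_nonneg.2 hle)]
        have e2 := mul_le_mul_of_nonneg_left e1
          (mul_nonneg (sq_nonneg τ) (sq_nonneg M))
        linarith [e2,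
          mul_nonneg (mul_nonneg (mul_nonneg (sq_nonneg τ) (sq_nonneg τ)) ht0) (sq_nonneg M)]
      have hcoef : Cd ^ 2 / c_a ^ 2 ≤ CC := by rw [hCCdef]; linarith [hA1, hA2, hA3]
      calc ‖eu t‖ ^ 2 ≤ Cd ^ 2 / c_a ^ 2 * (τ ^ 2 * M ^ 2 * t ^ 2) := h4
        _ ≤ Cd ^ 2 / c_a ^ 2 * (τ ^ 2 * (1 + τ ^ 2) * t * M ^ 2) :=
            mul_le_mul_of_nonneg_left ht2 hA2
        _ ≤ CC * (τ ^ 2 * (1 + τ ^ 2) * t * M ^ 2) :=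
            mul_le_mul_of_nonneg_right hcoef hq2
        _ ≤ CC * (τ ^ 2 * I + τ ^ 2 * (1 + τ ^ 2) * t * M ^ 2) := by
            rw [mul_add]
            linarith [mul_nonneg hCpos.le (mul_nonneg (sq_nonneg τ) hIpos)]
    · -- large time: use the elliptic equation directly
      have h1t : (1:ℝ) ≤ t := hgt.le
      have hsubB : Icc (t - τ) t ⊆ Icc (-τ) T := Icc_subset_Icc (by linarith) htT
      have hsubJ : Icc (t - 1) t ⊆ Icc (-τ) T := Icc_subset_Icc (by linarith) htT
      have htτ : t - τ ≤ t := by linarith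
      have ht1 : t - 1 ≤ t := by linarith
      -- FTC for ιQ ∘ pbar on [t-τ, t]
      have hFTCB : ∫ s in (t - τ)..t, ιQ (pbar' s) = ιQ (pbar t) - ιQ (pbar (t - τ)) :=
        intervalIntegral.integral_eq_sub_of_hasDeriv_right_of_le htτ
          (ιQ.continuous.comp_continuousOn (hpbc.mono hsubB))
          (fun x hx => (ιQ.hasFDerivAt.comp_hasDerivAt x
            ((hpbD x ⟨by linarith [hx.1], by linarith [hx.2, htT]⟩).hasDerivAt
              (Icc_mem_nhds (by linarith [hx.1]) (lt_of_lt_of_le hx.2 htT)))).hasDerivWithinAt)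
          ((ιQ.continuous.comp_continuousOn (hpb'c.mono hsubB)).intervalIntegrable_of_Icc htτ)
      have hnormB : ‖ιQ (pbar t) - ιQ (pbar (t - τ))‖
          ≤ ∫ s in (t - τ)..t, ‖ιQ (pbar' s)‖ := by
        rw [← hFTCB]; exact intervalIntegral.norm_integral_le_integral_norm htτ
      -- pointwise bound on [t-τ, t]
      have hJpt : ∀ s ∈ Icc (t - τ) t, ‖ιQ (pbar' s)‖
          ≤ (∫ σ in (t - 1)..t, ‖ιQ (pbar' σ)‖) + (1 + τ) * M := by
        intro s hs
        have hsmem : s ∈ Icc (-τ) t := ⟨by linarith [hs.1], hs.2⟩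
        have hper : ∀ σ ∈ Icc (t - 1) t,
            ‖ιQ (pbar' s)‖ - (1 + τ) * M ≤ ‖ιQ (pbar' σ)‖ := by
          intro σ hσ
          have hσmem : σ ∈ Icc (-τ) t := ⟨by linarith [hσ.1], hσ.2⟩
          have hl := hlip s hsmem σ hσmem
          have habs2 : |s - σ| ≤ 1 + τ :=
            abs_le.2 ⟨by linarith [hs.1, hσ.2], by linarith [hs.2, hσ.1]⟩
          have htri := norm_sub_norm_le (ιQ (pbar' s)) (ιQ (pbar' σ))
          have hmm : M * |s - σ| ≤ M * (1 + τ) := mul_le_mul_of_nonneg_left habs2 hM0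
          linarith
        have hintJ : IntervalIntegrable (fun σ => ‖ιQ (pbar' σ)‖) MeasureTheory.volume
            (t - 1) t :=
          ((ιQ.continuous.comp_continuousOn (hpb'c.mono hsubJ)).norm).intervalIntegrable_of_Icc ht1
        have h := intervalIntegral.integral_mono_on ht1 intervalIntegrable_const hintJ hper
        rw [intervalIntegral.integral_const, show t - (t - 1) = (1:ℝ) by ring, one_smul] at h
        linarith
      have hintn : IntervalIntegrable (fun s => ‖ιQ (pbar' s)‖) MeasureTheory.volume
          (t - τ) t :=
        ((ιQ.continuous.comp_continuousOn (hpb'c.mono hsubB)).norm).intervalIntegrable_of_Icc htτ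
      have hBle : ‖ιQ (pbar t) - ιQ (pbar (t - τ))‖
          ≤ τ * ((∫ σ in (t - 1)..t, ‖ιQ (pbar' σ)‖) + (1 + τ) * M) := by
        have h2 := intervalIntegral.integral_mono_on htτ hintn intervalIntegrable_const hJpt
        rw [intervalIntegral.integral_const, show t - (t - τ) = τ by ring, smul_eq_mul] at h2
        linarith
      have hJ0 : 0 ≤ ∫ σ in (t - 1)..t, ‖ιQ (pbar' σ)‖ :=
        intervalIntegral.integral_nonneg ht1 (fun _ _ => norm_nonneg _)
      have hJsq : (∫ σ in (t - 1)..t, ‖ιQ (pbar' σ)‖) ^ 2 ≤ I := by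
        have hcs := sq_integral_le ht1
          ((ιQ.continuous.comp_continuousOn (hpb'c.mono hsubJ)).norm)
          (fun _ _ => norm_nonneg _)
        have hmi : (∫ s in (t - 1)..t, ‖ιQ (pbar' s)‖ ^ 2) ≤ I := by
          rw [hIdef]
          exact intervalIntegral.integral_mono_interval (by linarith) ht1 le_rfl
            (MeasureTheory.ae_of_all _ (fun x => sq_nonneg _))
            (((ιQ.continuous.comp_continuousOn (hpb'c.mono h0tB)).norm.pow 2).intervalIntegrable_of_Icc ht0)
        calc (∫ σ in (t - 1)..t, ‖ιQ (pbar' σ)‖) ^ 2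
            ≤ (t - (t - 1)) * ∫ s in (t - 1)..t, ‖ιQ (pbar' s)‖ ^ 2 := hcs
          _ = ∫ s in (t - 1)..t, ‖ιQ (pbar' s)‖ ^ 2 := by
              rw [show t - (t - 1) = (1:ℝ) by ring, one_mul]
          _ ≤ I := hmi
      -- elliptic estimate at time t
      have htmem : t ∈ Icc (0:ℝ) T := ⟨ht0, htT⟩
      have hell := helli t htmem (eu t)
      have hSsplit : ιQ (pbar (t - τ)) - ιQ (p t)
          = ιQ (ep t) - (ιQ (pbar t) - ιQ (pbar (t - τ))) := by
        rw [hepdef]; simp only [map_sub]; abel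
      have hS0 : 0 ≤ ‖ιQ (pbar t) - ιQ (pbar (t - τ))‖ + CQ * ‖ep t‖ :=
        add_nonneg (norm_nonneg _) (mul_nonneg hCQ0 (norm_nonneg _))
      have hnorme : ‖ιQ (pbar (t - τ)) - ιQ (p t)‖
          ≤ ‖ιQ (pbar t) - ιQ (pbar (t - τ))‖ + CQ * ‖ep t‖ := by
        rw [hSsplit]
        refine le_trans (norm_sub_le _ _) ?_
        have h1 := hCQH (ep t)
        have h2 : C_QH * ‖ep t‖ ≤ CQ * ‖ep t‖ :=
          mul_le_mul_of_nonneg_right (le_max_left _ _) (norm_nonneg _)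
        linarith
      have hdS : a (eu t) (eu t) ≤ Cd * ‖eu t‖
          * (‖ιQ (pbar t) - ιQ (pbar (t - τ))‖ + CQ * ‖ep t‖) := by
        rw [hell]
        have h0 := le_abs_self (d (eu t) (ιQ (pbar (t - τ)) - ιQ (p t)))
        have h1 := hd_bdd (eu t) (ιQ (pbar (t - τ)) - ιQ (p t))
        have h2 : C_d * ‖eu t‖ * ‖ιQ (pbar (t - τ)) - ιQ (p t)‖
            ≤ Cd * ‖eu t‖ * ‖ιQ (pbar (t - τ)) - ιQ (p t)‖ :=
          mul_le_mul_of_nonneg_right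
            (mul_le_mul_of_nonneg_right (le_max_left _ _) (norm_nonneg _)) (norm_nonneg _)
        have h3 : Cd * ‖eu t‖ * ‖ιQ (pbar (t - τ)) - ιQ (p t)‖
            ≤ Cd * ‖eu t‖ * (‖ιQ (pbar t) - ιQ (pbar (t - τ))‖ + CQ * ‖ep t‖) :=
          mul_le_mul_of_nonneg_left hnorme (mul_nonneg hCd0 (norm_nonneg _))
        linarith
      have hcau := ha_coer (eu t)
      have heuB : ‖eu t‖ ≤ Cd * (‖ιQ (pbar t) - ιQ (pbar (t - τ))‖ + CQ * ‖ep t‖) / c_a := by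
        rcases (norm_nonneg (eu t)).eq_or_lt with h0 | hpos
        · rw [← h0]; exact div_nonneg (mul_nonneg hCd0 hS0) hc_a.le
        · have h5 : (c_a * ‖eu t‖) * ‖eu t‖
              ≤ (Cd * (‖ιQ (pbar t) - ιQ (pbar (t - τ))‖ + CQ * ‖ep t‖)) * ‖eu t‖ := by
            calc (c_a * ‖eu t‖) * ‖eu t‖ = c_a * ‖eu t‖ ^ 2 := by ring
              _ ≤ Cd * ‖eu t‖
                  * (‖ιQ (pbar t) - ιQ (pbar (t - τ))‖ + CQ * ‖ep t‖) := le_trans hcau hdS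
              _ = _ := by ring
          have h6 := le_of_mul_le_mul_right h5 hpos
          rw [le_div_iff₀ hc_a]
          linarith
      have heuB2 : ‖eu t‖ ^ 2 ≤ Cd ^ 2 / c_a ^ 2
          * (‖ιQ (pbar t) - ιQ (pbar (t - τ))‖ + CQ * ‖ep t‖) ^ 2 := by
        have h := pow_le_pow_left₀ (norm_nonneg _) heuB 2
        calc ‖eu t‖ ^ 2
            ≤ (Cd * (‖ιQ (pbar t) - ιQ (pbar (t - τ))‖ + CQ * ‖ep t‖) / c_a) ^ 2 := h
          _ = Cd ^ 2 / c_a ^ 2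
              * (‖ιQ (pbar t) - ιQ (pbar (t - τ))‖ + CQ * ‖ep t‖) ^ 2 := by
              field_simp
      have hBsq : ‖ιQ (pbar t) - ιQ (pbar (t - τ))‖ ^ 2
          ≤ 2 * τ ^ 2 * I + 2 * τ ^ 2 * (1 + τ) ^ 2 * M ^ 2 := by
        have hsq := pow_le_pow_left₀ (norm_nonneg _) hBle 2
        have e1 : ((∫ σ in (t - 1)..t, ‖ιQ (pbar' σ)‖) + (1 + τ) * M) ^ 2
            ≤ 2 * (∫ σ in (t - 1)..t, ‖ιQ (pbar' σ)‖) ^ 2 + 2 * ((1 + τ) * M) ^ 2 := by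
          linarith [sq_nonneg ((∫ σ in (t - 1)..t, ‖ιQ (pbar' σ)‖) - (1 + τ) * M)]
        have e2 : τ ^ 2 * (∫ σ in (t - 1)..t, ‖ιQ (pbar' σ)‖) ^ 2 ≤ τ ^ 2 * I :=
          mul_le_mul_of_nonneg_left hJsq (sq_nonneg τ)
        have e1' := mul_le_mul_of_nonneg_left e1 (sq_nonneg τ)
        linarith [hsq, e1', e2]
      have hS2 : (‖ιQ (pbar t) - ιQ (pbar (t - τ))‖ + CQ * ‖ep t‖) ^ 2
          ≤ 2 * ‖ιQ (pbar t) - ιQ (pbar (t - τ))‖ ^ 2 + 2 * CQ ^ 2 * ‖ep t‖ ^ 2 := by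
        linarith [sq_nonneg (‖ιQ (pbar t) - ιQ (pbar (t - τ))‖ - CQ * ‖ep t‖)]
      have hepterm : 2 * CQ ^ 2 * ‖ep t‖ ^ 2
          ≤ 2 * CQ ^ 2 * (Cd ^ 2 / (c_a * c_b) * (τ ^ 2 * t * M ^ 2)) := by
        apply mul_le_mul_of_nonneg_left hept2
        positivity
      have hfinal : ‖eu t‖ ^ 2 ≤ Cd ^ 2 / c_a ^ 2 * (4 * τ ^ 2 * I
          + 4 * τ ^ 2 * (1 + τ) ^ 2 * M ^ 2
          + 2 * CQ ^ 2 * (Cd ^ 2 / (c_a * c_b) * (τ ^ 2 * t * M ^ 2))) := by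
        have h3 : (‖ιQ (pbar t) - ιQ (pbar (t - τ))‖ + CQ * ‖ep t‖) ^ 2
            ≤ 4 * τ ^ 2 * I + 4 * τ ^ 2 * (1 + τ) ^ 2 * M ^ 2
              + 2 * CQ ^ 2 * (Cd ^ 2 / (c_a * c_b) * (τ ^ 2 * t * M ^ 2)) := by
          linarith
        calc ‖eu t‖ ^ 2 ≤ Cd ^ 2 / c_a ^ 2
              * (‖ιQ (pbar t) - ιQ (pbar (t - τ))‖ + CQ * ‖ep t‖) ^ 2 := heuB2
          _ ≤ _ := mul_le_mul_of_nonneg_left h3 hA2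
      -- convert to the required shape
      have hone : (0:ℝ) ≤ 1 + τ ^ 2 := by positivity
      have hM1 : 4 * τ ^ 2 * (1 + τ) ^ 2 * M ^ 2
            + 2 * CQ ^ 2 * (Cd ^ 2 / (c_a * c_b) * (τ ^ 2 * t * M ^ 2))
          ≤ (8 + 2 * CQ ^ 2 * (Cd ^ 2 / (c_a * c_b)))
            * (τ ^ 2 * (1 + τ ^ 2) * t * M ^ 2) := by
        have e1 : (1 + τ) ^ 2 ≤ 2 * (1 + τ ^ 2) := by linarith [sq_nonneg (1 - τ)]
        have f1a := mul_le_mul_of_nonneg_left e1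
          (by positivity : (0:ℝ) ≤ 4 * (τ ^ 2 * M ^ 2))
        have f2 : (0:ℝ) ≤ τ ^ 2 * (1 + τ ^ 2) * M ^ 2 * (t - 1) := by
          apply mul_nonneg _ (by linarith)
          positivity
        have f3 : τ ^ 2 * t * M ^ 2 ≤ τ ^ 2 * (1 + τ ^ 2) * t * M ^ 2 := by
          linarith [mul_nonneg (mul_nonneg (mul_nonneg (sq_nonneg τ) (sq_nonneg τ)) ht0)
            (sq_nonneg M)]
        have f3' := mul_le_mul_of_nonneg_left f3
          (by positivity : (0:ℝ) ≤ 2 * CQ ^ 2 * (Cd ^ 2 / (c_a * c_b)))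
        linarith [f1a, f2, f3']
      have hc1 : 4 * (Cd ^ 2 / c_a ^ 2) ≤ CC := by rw [hCCdef]; linarith [hA1, hA2, hA3]
      have hc2 : (Cd ^ 2 / c_a ^ 2) * (8 + 2 * CQ ^ 2 * (Cd ^ 2 / (c_a * c_b))) ≤ CC := by
        rw [hCCdef]; linarith [hA1, hA2, hA3]
      have hq1 : (0:ℝ) ≤ τ ^ 2 * I := mul_nonneg (sq_nonneg _) hIpos
      have g1 : Cd ^ 2 / c_a ^ 2 * (4 * τ ^ 2 * I) ≤ CC * (τ ^ 2 * I) := by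
        calc Cd ^ 2 / c_a ^ 2 * (4 * τ ^ 2 * I) = 4 * (Cd ^ 2 / c_a ^ 2) * (τ ^ 2 * I) := by
              ring
          _ ≤ CC * (τ ^ 2 * I) := mul_le_mul_of_nonneg_right hc1 hq1
      have g2 : Cd ^ 2 / c_a ^ 2 * ((8 + 2 * CQ ^ 2 * (Cd ^ 2 / (c_a * c_b)))
            * (τ ^ 2 * (1 + τ ^ 2) * t * M ^ 2))
          ≤ CC * (τ ^ 2 * (1 + τ ^ 2) * t * M ^ 2) := by
        calc Cd ^ 2 / c_a ^ 2 * ((8 + 2 * CQ ^ 2 * (Cd ^ 2 / (c_a * c_b)))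
              * (τ ^ 2 * (1 + τ ^ 2) * t * M ^ 2))
            = (Cd ^ 2 / c_a ^ 2) * (8 + 2 * CQ ^ 2 * (Cd ^ 2 / (c_a * c_b)))
              * (τ ^ 2 * (1 + τ ^ 2) * t * M ^ 2) := by ring
          _ ≤ CC * (τ ^ 2 * (1 + τ ^ 2) * t * M ^ 2) :=
              mul_le_mul_of_nonneg_right hc2 hq2
      have hMscaled := mul_le_mul_of_nonneg_left hM1 hA2
      calc ‖eu t‖ ^ 2 ≤ Cd ^ 2 / c_a ^ 2 * (4 * τ ^ 2 * I
            + 4 * τ ^ 2 * (1 + τ) ^ 2 * M ^ 2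
            + 2 * CQ ^ 2 * (Cd ^ 2 / (c_a * c_b) * (τ ^ 2 * t * M ^ 2))) := hfinal
        _ = Cd ^ 2 / c_a ^ 2 * (4 * τ ^ 2 * I)
              + Cd ^ 2 / c_a ^ 2 * (4 * τ ^ 2 * (1 + τ) ^ 2 * M ^ 2
                + 2 * CQ ^ 2 * (Cd ^ 2 / (c_a * c_b) * (τ ^ 2 * t * M ^ 2))) := by ring
        _ ≤ CC * (τ ^ 2 * I) + CC * (τ ^ 2 * (1 + τ ^ 2) * t * M ^ 2) :=
            add_le_add g1 (le_trans hMscaled g2)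
        _ = CC * (τ ^ 2 * I + τ ^ 2 * (1 + τ ^ 2) * t * M ^ 2) := by ring
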